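/- Fix a nonzero vector v ∈ ℝ^m. The function u ↦ g(u,v) is differentiable at every u ≠ 0, and its gradient at such u equals (1/(2π))·‖v‖·(u/‖u‖)·sin θ_{u,v} + (1/(2π))·(π − θ_{u,v})·v. -/

import Mathlib

open scoped RealInnerProductSpace
open InnerProductGeometry Real

set_option maxHeartbeats 1000000

/-- The ReLU function `σ(z) = max{z, 0}`. -/
noncomputable def relu (z : ℝ) : ℝ := max z 0

/-- `g u v = (1/(2π))·‖u‖·‖v‖·(sin θ_{u,v} + (π − θ_{u,v})·cos θ_{u,v})`. -/
noncomputable def g {E : Type*} [NormedAddCommGroup E] [InnerProductSpace ℝ E]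
    (u v : E) : ℝ :=
  (1 / (2 * π)) * ‖u‖ * ‖v‖ *
    (Real.sin (angle u v) + (π - angle u v) * Real.cos (angle u v))

section Aux
variable {E : Type*} [NormedAddCommGroup E] [InnerProductSpace ℝ E]

lemma g_eq (w v : E) : g w v = (1/(2*π)) * (‖w‖ * ‖v‖ * Real.sin (angle w v)
    + (π - angle w v) * ⟪w, v⟫) := by
  rw [g, ← cos_angle_mul_norm_mul_norm]
  ring

lemma hasGradientAt_inner [CompleteSpace E] (z x : E) :
    HasGradientAt (fun w : E => ⟪w, z⟫) z x := by
  rw [hasGradientAt_iff_hasFDerivAt]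
  have : (fun w : E => ⟪w, z⟫) = fun w => (InnerProductSpace.toDual ℝ E z) w := by
    funext w; simp [real_inner_comm]
  rw [this]
  exact (InnerProductSpace.toDual ℝ E z).hasFDerivAt

lemma par_grad [CompleteSpace E] (u : E) (hu : u ≠ 0) (r : ℝ) (hr : 0 < r) :
    HasGradientAt (fun w : E => g w (r • u)) ((1/2 : ℝ) • (r • u)) u := by
  set v := r • u with hv
  have hvne : v ≠ 0 := smul_ne_zero hr.ne' hu
  have nu : (0:ℝ) < ‖u‖ := norm_pos_iff.2 hu
  have nv : (0:ℝ) < ‖v‖ := norm_pos_iff.2 hvne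
  have hpi := Real.pi_pos
  have key : ∀ w : E, g w v = (1/2) * ⟪w, v⟫
      + (1/(2*π)) * (‖w‖ * ‖v‖) * (Real.sin (angle w v) - angle w v * Real.cos (angle w v)) := by
    intro w
    rw [g_eq, ← cos_angle_mul_norm_mul_norm w v]
    field_simp
    ring
  have hang : angle u v = 0 := by rw [hv, angle_smul_right_of_pos u u hr, angle_self hu]
  rw [hasGradientAt_iff_hasFDerivAt, hasFDerivAt_iff_isLittleO_nhds_zero]
  have fu : g u v = (1/2) * ⟪u, v⟫ := by rw [key u, hang]; simp
  have heq : ∀ h : E, g (u + h) v - g u v - (InnerProductSpace.toDual ℝ E ((1/2:ℝ) • v)) h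
      = (1/(2*π)) * (‖u+h‖ * ‖v‖) *
        (Real.sin (angle (u+h) v) - angle (u+h) v * Real.cos (angle (u+h) v)) := by
    intro h
    rw [key (u+h), fu, InnerProductSpace.toDual_apply_apply, real_inner_smul_left,
      inner_add_left, real_inner_comm v h]
    ring
  rw [Asymptotics.isLittleO_iff]
  intro ε hε
  set K := (1/(2*π)) * ‖v‖ * (π/2)^3 * 2 / ‖u‖^2 with hK
  have hKpos : 0 < K := by positivity
  have hδ : (0:ℝ) < min (‖u‖/2) (Real.sqrt (ε/K)) :=
    lt_min (by positivity) (Real.sqrt_pos.2 (by positivity))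
  filter_upwards [Metric.closedBall_mem_nhds (0:E) hδ] with h hh
  rw [Metric.mem_closedBall, dist_zero_right] at hh
  have hh1 : ‖h‖ ≤ ‖u‖/2 := hh.trans (min_le_left _ _)
  have hh2 : ‖h‖ ≤ Real.sqrt (ε/K) := hh.trans (min_le_right _ _)
  set w := u + h with hw
  have hwn : ‖u‖/2 ≤ ‖w‖ := by
    have h1 : ‖u‖ ≤ ‖w‖ + ‖h‖ := by
      calc ‖u‖ = ‖w + -h‖ := by rw [hw]; congr 1; abel
      _ ≤ ‖w‖ + ‖-h‖ := norm_add_le _ _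
      _ = ‖w‖ + ‖h‖ := by rw [norm_neg]
    linarith
  have hwpos : (0:ℝ) < ‖w‖ := by linarith
  set θ := angle w v with hθ
  have hθ0 : 0 ≤ θ := angle_nonneg _ _
  have hθπ : θ ≤ π := angle_le_pi _ _
  have hs0 : 0 ≤ Real.sin θ := Real.sin_nonneg_of_nonneg_of_le_pi hθ0 hθπ
  -- sin bound
  have hsinw : Real.sin θ * ‖w‖ ≤ ‖h‖ := by
    have hsin : Real.sin θ * (‖w‖ * ‖v‖) ≤ ‖h‖ * ‖v‖ := by
      rw [hθ, sin_angle_mul_norm_mul_norm]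
      have e : ⟪w,w⟫ * ⟪v,v⟫ - ⟪w,v⟫*⟪w,v⟫ = r^2 * (⟪h,h⟫*⟪u,u⟫ - ⟪u,h⟫^2) := by
        simp only [hw, hv, inner_add_left, inner_add_right, real_inner_smul_left,
          real_inner_smul_right, real_inner_comm h u]
        ring
      have hgram : ⟪w,w⟫ * ⟪v,v⟫ - ⟪w,v⟫*⟪w,v⟫ ≤ (‖h‖*‖v‖)^2 := by
        rw [e]
        have e2 : ‖v‖ = r * ‖u‖ := by rw [hv, norm_smul, Real.norm_eq_abs, abs_of_pos hr]
        rw [e2, real_inner_self_eq_norm_sq, real_inner_self_eq_norm_sq]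
        nlinarith [sq_nonneg (⟪u,h⟫ : ℝ)]
      calc √(⟪w,w⟫ * ⟪v,v⟫ - ⟪w,v⟫*⟪w,v⟫) ≤ √((‖h‖*‖v‖)^2) := Real.sqrt_le_sqrt hgram
      _ = ‖h‖*‖v‖ := Real.sqrt_sq (by positivity)
    nlinarith [hsin, nv]
  -- cos nonneg
  have hip : 0 ≤ (⟪w, v⟫ : ℝ) := by
    have e : (⟪w,v⟫ : ℝ) = r * (⟪u,u⟫ + ⟪u,h⟫) := by
      simp only [hw, hv, inner_add_left, real_inner_smul_right, real_inner_comm h u]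
      ring
    have hCS : |(⟪u,h⟫ : ℝ)| ≤ ‖u‖*‖h‖ := abs_real_inner_le_norm u h
    rw [e, real_inner_self_eq_norm_sq]
    have h0 : (0:ℝ) ≤ ‖u‖^2 + ⟪u,h⟫ := by nlinarith [abs_le.1 hCS]
    exact mul_nonneg hr.le h0
  have hcos : 0 ≤ Real.cos θ := by
    rw [hθ, cos_angle]
    exact div_nonneg hip (by positivity)
  have hθhalf : θ ≤ π/2 := by
    by_contra hc
    push_neg at hc
    have := Real.cos_neg_of_pi_div_two_lt_of_lt hc (by linarith)
    linarith
  have hjord : θ ≤ π/2 * Real.sin θ := by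
    have h2 := Real.mul_le_sin hθ0 hθhalf
    have : 2/π * θ * (π/2) ≤ Real.sin θ * (π/2) := by nlinarith
    calc θ = 2/π * θ * (π/2) := by field_simp
    _ ≤ Real.sin θ * (π/2) := this
    _ = π/2 * Real.sin θ := by ring
  have hnonneg : 0 ≤ Real.sin θ - θ * Real.cos θ := by
    rcases lt_or_eq_of_le hθhalf with hlt | heq2
    · have hcpos : 0 < Real.cos θ := Real.cos_pos_of_mem_Ioo ⟨by linarith, hlt⟩
      have ht := Real.le_tan hθ0 hlt
      rw [Real.tan_eq_sin_div_cos, le_div_iff₀ hcpos] at ht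
      linarith
    · rw [heq2]
      simp [Real.cos_pi_div_two, Real.sin_pi_div_two]
  have hub : Real.sin θ - θ * Real.cos θ ≤ θ^3/2 := by
    have h1 : Real.sin θ ≤ θ := Real.sin_le hθ0
    have h2 : 1 - θ^2/2 ≤ Real.cos θ := Real.one_sub_sq_div_two_le_cos
    nlinarith
  -- now the final chain
  rw [heq h]
  have hcube : θ^3 ≤ (π/2)^3 * Real.sin θ^3 := by
    have := pow_le_pow_left₀ hθ0 hjord 3
    calc θ^3 ≤ (π/2 * Real.sin θ)^3 := this
    _ = (π/2)^3 * Real.sin θ^3 := by ring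
  have hAS : ‖w‖ * Real.sin θ^3 ≤ 4 * ‖h‖^3 / ‖u‖^2 := by
    have t2 : (Real.sin θ * ‖w‖)^3 ≤ ‖h‖^3 := pow_le_pow_left₀ (by positivity) hsinw 3
    rw [le_div_iff₀ (by positivity : (0:ℝ) < ‖u‖^2)]
    have hu2 : ‖u‖^2 ≤ 4*‖w‖^2 := by nlinarith [hwn, nu]
    calc ‖w‖ * Real.sin θ^3 * ‖u‖^2 ≤ ‖w‖ * Real.sin θ^3 * (4*‖w‖^2) := by
          apply mul_le_mul_of_nonneg_left hu2 (by positivity)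
      _ = 4 * (Real.sin θ * ‖w‖)^3 := by ring
      _ ≤ 4 * ‖h‖^3 := by linarith
  have hV0 : 0 ≤ (1/(2*π)) * (‖w‖ * ‖v‖) * (Real.sin θ - θ * Real.cos θ) := by positivity
  rw [Real.norm_eq_abs, abs_of_nonneg hV0]
  have hh2' : ‖h‖^2 ≤ ε/K := by
    have := pow_le_pow_left₀ (norm_nonneg h) hh2 2
    rwa [Real.sq_sqrt (by positivity : (0:ℝ) ≤ ε/K)] at this
  calc (1/(2*π)) * (‖w‖ * ‖v‖) * (Real.sin θ - θ * Real.cos θ)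
      ≤ (1/(2*π)) * (‖w‖ * ‖v‖) * (θ^3/2) := by
        apply mul_le_mul_of_nonneg_left (by linarith) (by positivity)
    _ ≤ (1/(2*π)) * (‖w‖ * ‖v‖) * ((π/2)^3 * Real.sin θ^3/2) := by
        apply mul_le_mul_of_nonneg_left (by linarith) (by positivity)
    _ = (1/(2*π)) * ‖v‖ * (π/2)^3 / 2 * (‖w‖ * Real.sin θ^3) := by ring
    _ ≤ (1/(2*π)) * ‖v‖ * (π/2)^3 / 2 * (4 * ‖h‖^3 / ‖u‖^2) := by
        apply mul_le_mul_of_nonneg_left hAS (by positivity)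
    _ = K * ‖h‖^2 * ‖h‖ := by rw [hK]; ring
    _ ≤ ε * ‖h‖ := by
        have hKε : K * (ε/K) = ε := by field_simp
        have h3 := mul_le_mul_of_nonneg_left hh2' hKpos.le
        nlinarith [norm_nonneg h]

lemma generic_grad [CompleteSpace E] (u v : E) (hu : u ≠ 0) (hv : v ≠ 0)
    (h0 : angle u v ≠ 0) (hπ : angle u v ≠ π) :
    HasGradientAt (fun w : E => g w v)
      (((1/(2*π)) * ‖v‖ * Real.sin (angle u v) / ‖u‖) • u
        + ((1/(2*π)) * (π - angle u v)) • v) u := by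
  have nu : (0:ℝ) < ‖u‖ := norm_pos_iff.2 hu
  have nv : (0:ℝ) < ‖v‖ := norm_pos_iff.2 hv
  have hpi := Real.pi_pos
  have hθpos : 0 < angle u v := lt_of_le_of_ne (angle_nonneg u v) (Ne.symm h0)
  have hθlt : angle u v < π := lt_of_le_of_ne (angle_le_pi u v) hπ
  have hs : 0 < Real.sin (angle u v) := Real.sin_pos_of_pos_of_lt_pi hθpos hθlt
  -- derivative of the norm
  have hn : HasFDerivAt (fun w : E => ‖w‖) ((‖u‖)⁻¹ • innerSL ℝ u) u := by
    have h2 := (hasStrictFDerivAt_norm_sq u).hasFDerivAt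
    have h3 := h2.sqrt (by positivity : ‖u‖^2 ≠ 0)
    have e1 : (fun w : E => √(‖w‖^2)) = fun w : E => ‖w‖ := by
      funext w; rw [Real.sqrt_sq (norm_nonneg w)]
    rw [e1] at h3
    convert h3 using 1
    rw [Real.sqrt_sq (norm_nonneg u)]
    ext h
    simp
    field_simp
  -- derivative of the inner product
  have hp : HasFDerivAt (fun w : E => (⟪w, v⟫ : ℝ)) (innerSL ℝ v) u := by
    have : (fun w : E => (⟪w, v⟫ : ℝ)) = fun w => (innerSL ℝ v) w := by
      funext w; simp [real_inner_comm]
    rw [this]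
    exact (innerSL ℝ v).hasFDerivAt
  -- derivative of t = ⟪w,v⟫ / (‖w‖ * ‖v‖)
  set T : E →L[ℝ] ℝ := (‖u‖*‖v‖)⁻¹ • innerSL ℝ v - (⟪u,v⟫/(‖u‖^3*‖v‖)) • innerSL ℝ u with hT
  have ht : HasFDerivAt (fun w : E => (⟪w, v⟫ : ℝ) / (‖w‖ * ‖v‖)) T u := by
    have hq : HasFDerivAt (fun w : E => ‖w‖ * ‖v‖) (‖v‖ • ((‖u‖)⁻¹ • innerSL ℝ u)) u :=
      hn.mul_const ‖v‖
    have hqinv := (hasDerivAt_inv (by positivity : ‖u‖ * ‖v‖ ≠ 0)).comp_hasFDerivAt u hq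
    have hd := hp.mul hqinv
    have e0 : (fun w : E => (⟪w, v⟫ : ℝ) / (‖w‖ * ‖v‖))
        = fun w : E => (⟪w, v⟫ : ℝ) * ((‖w‖ * ‖v‖)⁻¹) := by
      funext w; rw [div_eq_mul_inv]
    rw [e0]
    convert hd using 1
    · rfl
    · rfl
    · rfl
    ext h
    simp only [hT, ContinuousLinearMap.sub_apply, ContinuousLinearMap.smul_apply,
      ContinuousLinearMap.coe_smul', Pi.smul_apply, smul_eq_mul, innerSL_apply_apply,
      ContinuousLinearMap.add_apply, Function.comp_apply]
    field_simp
    ring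
  -- derivative of the angle
  have hcos : Real.cos (angle u v) = ⟪u,v⟫ / (‖u‖ * ‖v‖) := cos_angle u v
  have ht1 : (⟪u,v⟫ : ℝ) / (‖u‖ * ‖v‖) ≠ 1 := by
    intro hc
    apply h0
    rw [angle, hc, Real.arccos_one]
  have ht2 : (⟪u,v⟫ : ℝ) / (‖u‖ * ‖v‖) ≠ -1 := by
    intro hc
    apply hπ
    rw [angle, hc, Real.arccos_neg_one]
  have hθ : HasFDerivAt (fun w : E => angle w v)
      ((-(1 / Real.sin (angle u v))) • T) u := by
    have harc := (Real.hasDerivAt_arccos ht2 ht1).comp_hasFDerivAt u ht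
    have e2 : Real.arccos ∘ (fun w : E => (⟪w, v⟫ : ℝ) / (‖w‖ * ‖v‖)) = fun w => angle w v := by
      funext w; simp [Function.comp, angle]
    rw [e2] at harc
    convert harc using 2
    · rfl
    · rfl
    rw [← hcos]
    congr 1
    rw [show (1 : ℝ) - Real.cos (angle u v)^2 = Real.sin (angle u v)^2 by
      nlinarith [Real.sin_sq_add_cos_sq (angle u v)]]
    rw [Real.sqrt_sq hs.le]
  -- assemble
  have hsin : HasFDerivAt (fun w : E => Real.sin (angle w v))
      (Real.cos (angle u v) • ((-(1 / Real.sin (angle u v))) • T)) u :=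
    by have := (Real.hasDerivAt_sin (angle u v)).comp_hasFDerivAt u hθ; exact this
  have H1 := ((hn.mul_const ‖v‖).mul hsin)
  have H2 := (((hasFDerivAt_const π u).sub hθ).mul hp)
  have H := (H1.add H2).const_mul (1/(2*π))
  rw [hasGradientAt_iff_hasFDerivAt]
  have hfun : (fun w : E => g w v) = fun w : E =>
      (1/(2*π)) * (‖w‖ * ‖v‖ * Real.sin (angle w v) + (π - angle w v) * ⟪w, v⟫) := by
    funext w; exact g_eq w v
  rw [hfun]
  convert H using 1
  · rfl
  · rfl
  ext h
  simp only [InnerProductSpace.toDual_apply_apply, inner_add_left, real_inner_smul_left,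
    ContinuousLinearMap.add_apply, ContinuousLinearMap.smul_apply, smul_eq_mul,
    ContinuousLinearMap.coe_smul', Pi.smul_apply, ContinuousLinearMap.sub_apply,
    ContinuousLinearMap.coe_sub', Pi.sub_apply, innerSL_apply_apply, hT,
    ContinuousLinearMap.zero_apply, ContinuousLinearMap.neg_apply, sub_zero, zero_sub, neg_mul, mul_neg, neg_neg]
  have hip : (⟪u,v⟫ : ℝ) = Real.cos (angle u v) * (‖u‖ * ‖v‖) :=
    (cos_angle_mul_norm_mul_norm u v).symm
  set c := Real.cos (angle u v)
  set s := Real.sin (angle u v)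
  set X := (⟪u,h⟫ : ℝ)
  set P := (⟪v,h⟫ : ℝ)
  rw [hip]
  field_simp
  ring
end Aux

/-- For fixed nonzero `v ∈ ℝ^m`, the function `u ↦ g u v` is differentiable at every `u ≠ 0`
with gradient `(1/(2π))·‖v‖·(u/‖u‖)·sin θ_{u,v} + (1/(2π))·(π − θ_{u,v})·v`. -/
theorem stmt1 (m : ℕ) (v : EuclideanSpace ℝ (Fin m)) (hv : v ≠ 0)
    (u : EuclideanSpace ℝ (Fin m)) (hu : u ≠ 0) :
    HasGradientAt (fun w : EuclideanSpace ℝ (Fin m) => g w v)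
      (((1 / (2 * π)) * ‖v‖ * Real.sin (angle u v) / ‖u‖) • u
        + ((1 / (2 * π)) * (π - angle u v)) • v) u := by
  by_cases h0 : angle u v = 0
  · obtain ⟨-, r, hr, hvr⟩ := angle_eq_zero_iff.1 h0
    have hpar := par_grad u hu r hr
    rw [← hvr] at hpar
    have e1 : (1 / (2*π)) * ‖v‖ * Real.sin (angle u v) / ‖u‖ = 0 := by
      rw [h0]; simp
    have e2 : (1 / (2*π)) * (π - angle u v) = 1/2 := by
      rw [h0]
      have := Real.pi_ne_zero
      field_simp
      ring
    rw [e1, e2, zero_smul, zero_add]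
    exact hpar
  by_cases hp : angle u v = π
  · obtain ⟨-, r, hr, hvr⟩ := angle_eq_pi_iff.1 hp
    have e1 : (1 / (2*π)) * ‖v‖ * Real.sin (angle u v) / ‖u‖ = 0 := by
      rw [hp]; simp
    have e2 : (1 / (2*π)) * (π - angle u v) = 0 := by rw [hp]; simp
    rw [e1, e2, zero_smul, zero_smul, zero_add]
    have hneg : HasGradientAt (fun w : EuclideanSpace ℝ (Fin m) => g w (-v))
        ((1/2 : ℝ) • (-v)) u := by
      have h' := par_grad u hu (-r) (neg_pos.2 hr)
      have e3 : -v = (-r) • u := by rw [hvr, neg_smul]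
      rw [← e3] at h'
      exact h'
    have hlin : HasGradientAt (fun w : EuclideanSpace ℝ (Fin m) => (⟪w, (1/2 : ℝ) • v⟫ : ℝ))
        ((1/2 : ℝ) • v) u := hasGradientAt_inner _ _
    have key : (fun w : EuclideanSpace ℝ (Fin m) => g w v)
        = fun w => g w (-v) + ⟪w, (1/2 : ℝ) • v⟫ := by
      funext w
      rw [real_inner_smul_right, g_eq, g_eq, angle_neg_right, norm_neg, inner_neg_right,
        Real.sin_pi_sub]
      have := Real.pi_ne_zero
      field_simp
      ring
    rw [key, hasGradientAt_iff_hasFDerivAt] at *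
    have hsum := hneg.add hlin
    have e4 : ((1/2 : ℝ) • (-v)) + ((1/2 : ℝ) • v) = 0 := by
      rw [smul_neg]; abel
    rw [← map_add, e4] at hsum
    exact hsum
  exact generic_grad u v hu hv h0 hp
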